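/- Let R be a finite local ring. Then the complement of the unitary Cayley graph G_R is always Ramanujan: its eigenvalues are m − 1 with multiplicity |R|/m and −1 with multiplicity (|R|/m)(m − 1), where m is the order of the maximal ideal. -/

import Mathlib

open Polynomial

open Polynomial

open Matrix

/-- The unitary Cayley graph of a finite commutative ring `R`. -/
def unitaryCayley (R : Type*) [CommRing R] [Fintype R] [DecidableEq R] : SimpleGraph R where
  Adj x y := x ≠ y ∧ IsUnit (x - y)
  symm := ⟨by
    intro x y h
    exact ⟨h.1.symm, by simpa using h.2.neg⟩⟩
  loopless := ⟨fun x h => h.1 rfl⟩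

instance unitaryCayley.instDecidableRel (R : Type*) [CommRing R] [Fintype R] [DecidableEq R] :
    DecidableRel (unitaryCayley R).Adj := fun a b =>
  decidable_of_iff (a ≠ b ∧ ∃ c, (a - b) * c = 1)
    (and_congr Iff.rfl (isUnit_iff_exists_inv (a := a - b)).symm)

/-- An `r`-regular graph is Ramanujan if every adjacency eigenvalue other than `±r`
has absolute value at most `2 * sqrt (r - 1)`. -/
def IsRamanujan {V : Type*} [Fintype V] [DecidableEq V] (G : SimpleGraph V)
    [DecidableRel G.Adj] (r : ℕ) : Prop :=
  ∀ μ ∈ (SimpleGraph.adjMatrix ℝ G).charpoly.roots,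
    |μ| ≠ (r : ℝ) → |μ| ≤ 2 * Real.sqrt ((r : ℝ) - 1)

/-- The energy of a graph: the sum of absolute values of its adjacency eigenvalues. -/
noncomputable def graphEnergy {V : Type*} [Fintype V] [DecidableEq V] (G : SimpleGraph V)
    [DecidableRel G.Adj] : ℝ :=
  ((SimpleGraph.adjMatrix ℝ G).charpoly.roots.map (fun μ => |μ|)).sum

-- block diagonal charmatrix
lemma charmatrix_blockDiagonal {o n R : Type*} [Fintype o] [DecidableEq o] [Fintype n]
    [DecidableEq n] [CommRing R] (M : o → Matrix n n R) :
    charmatrix (blockDiagonal M) = blockDiagonal (fun k => charmatrix (M k)) := by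
  ext ⟨i, k⟩ ⟨j, k'⟩
  by_cases h : k = k'
  · subst h
    by_cases hij : i = j
    · subst hij; simp [blockDiagonal_apply]
    · rw [charmatrix_apply_ne _ _ _ (by simp [Prod.ext_iff, hij])]
      simp [blockDiagonal_apply, charmatrix_apply_ne _ _ _ hij]
  · rw [charmatrix_apply_ne _ _ _ (by simp [Prod.ext_iff, h])]
    simp [blockDiagonal_apply, h]

lemma charpoly_blockDiagonal {o n R : Type*} [Fintype o] [DecidableEq o] [Fintype n]
    [DecidableEq n] [CommRing R] (M : o → Matrix n n R) :
    (blockDiagonal M).charpoly = ∏ k, (M k).charpoly := by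
  rw [Matrix.charpoly, charmatrix_blockDiagonal, det_blockDiagonal]
  rfl


lemma charpoly_K {ι : Type*} [Fintype ι] [DecidableEq ι] [Nonempty ι] :
    (Matrix.of (fun i j : ι => if i = j then (0:ℝ) else 1)).charpoly =
      (X - C ((Fintype.card ι : ℝ) - 1)) * (X + C 1) ^ (Fintype.card ι - 1) := by
  set k := Fintype.card ι with hk
  have hk1 : 1 ≤ k := Fintype.card_pos
  apply Polynomial.eq_of_infinite_eval_eq
  apply Set.Infinite.mono (s := Set.Iio (-1 : ℝ)) _ (Set.Iio_infinite _)
  intro x hx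
  have hx1 : x + 1 ≠ 0 := by
    intro h; simp only [Set.mem_Iio] at hx; nlinarith
  simp only [Set.mem_setOf_eq]
  have heval : eval x ((Matrix.of (fun i j : ι => if i = j then (0:ℝ) else 1)).charpoly)
      = ((Matrix.of (fun i j : ι => if i = j then (0:ℝ) else 1)).charmatrix.map
          (evalRingHom x)).det := by
    rw [Matrix.charpoly, ← Polynomial.coe_evalRingHom, RingHom.map_det,
      RingHom.mapMatrix_apply]
  have hmap : (Matrix.of (fun i j : ι => if i = j then (0:ℝ) else 1)).charmatrix.map
      (evalRingHom x)
      = (x+1) • (1 + replicateCol Unit (fun _ : ι => -(x+1)⁻¹) * replicateRow Unit (fun _ : ι => (1:ℝ))) := by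
    ext i j
    rw [Matrix.map_apply]
    by_cases hij : i = j
    · subst hij
      rw [charmatrix_apply_eq]
      simp only [coe_evalRingHom, eval_sub, eval_X, eval_C, Matrix.smul_apply,
        Matrix.add_apply, Matrix.one_apply_eq, Matrix.mul_apply, Matrix.of_apply,
        replicateCol_apply, replicateRow_apply, if_pos rfl, smul_eq_mul, if_true,
        Finset.univ_unique, Finset.sum_singleton]
      field_simp
      ring
    · rw [charmatrix_apply_ne _ _ _ hij]
      simp only [coe_evalRingHom, eval_neg, eval_C, Matrix.smul_apply,
        Matrix.add_apply, Matrix.one_apply_ne hij, Matrix.mul_apply, Matrix.of_apply,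
        replicateCol_apply, replicateRow_apply, if_neg hij, smul_eq_mul]
      simp only [Finset.univ_unique, Finset.sum_singleton]
      field_simp
      ring
  rw [heval, hmap, det_smul, det_one_add_replicateCol_mul_replicateRow]
  have hdot : (fun _ : ι => (1:ℝ)) ⬝ᵥ (fun _ : ι => -(x+1)⁻¹) = -(k * (x+1)⁻¹) := by
    simp [dotProduct, hk, Finset.sum_const, mul_comm]
  rw [hdot]
  have hpow : (x+1)^k = (x+1)^(k-1) * (x+1) := by
    conv_lhs => rw [← Nat.sub_add_cancel hk1]
    rw [pow_succ]
  have hrhs : eval x ((X - C ((k : ℝ) - 1)) * (X + C 1) ^ (k - 1))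
      = (x - ((k:ℝ)-1)) * (x+1)^(k-1) := by simp
  rw [hpow, hrhs]
  field_simp
  ring


theorem main_charpoly (R : Type*) [CommRing R] [IsLocalRing R] [Fintype R] [DecidableEq R]
    (M : Ideal R) (hM : M.IsMaximal) (m : ℕ) (hm : m = Nat.card M) :
      (SimpleGraph.adjMatrix ℝ (unitaryCayley R)ᶜ).charpoly =
        (X - C ((m : ℝ) - 1)) ^ (Fintype.card R / m) *
          (X + C (1 : ℝ)) ^ ((Fintype.card R / m) * (m - 1)) := by
  classical
  haveI : Fintype (R ⧸ M) := Fintype.ofFinite _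
  haveI : Fintype ↥M := Fintype.ofFinite _
  have hMmax : M = IsLocalRing.maximalIdeal R := IsLocalRing.eq_maximalIdeal hM
  have hout : ∀ q : R ⧸ M, Ideal.Quotient.mk M (Quotient.out q) = q := fun q =>
    Quotient.out_eq q
  have hmem : ∀ z : R, ¬ IsUnit z ↔ z ∈ M := by
    intro z; rw [hMmax]; exact Iff.rfl
  have hmcard : m = Fintype.card ↥M := by rw [hm, Nat.card_eq_fintype_card]
  have hm1 : 1 ≤ m := by rw [hmcard]; exact Fintype.card_pos
  -- the equiv
  set f : ↥M × (R ⧸ M) → R := fun p => Quotient.out p.2 + (p.1 : R) with hf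
  have hπf : ∀ p : ↥M × (R ⧸ M), Ideal.Quotient.mk M (f p) = p.2 := by
    rintro ⟨t, q⟩
    simp only [hf, map_add, hout]
    rw [Ideal.Quotient.eq_zero_iff_mem.mpr t.2, add_zero]
  have hinj : Function.Injective f := by
    rintro ⟨t, q⟩ ⟨t', q'⟩ h
    have hq : q = q' := by
      have := congrArg (Ideal.Quotient.mk M) h
      rwa [hπf ⟨t, q⟩, hπf ⟨t', q'⟩] at this
    subst hq
    have : (t : R) = t' := by
      simpa [hf] using h
    exact Prod.ext (Subtype.ext this) rfl
  have hsurj : Function.Surjective f := by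
    intro x
    refine ⟨⟨⟨x - Quotient.out (Ideal.Quotient.mk M x), ?_⟩, Ideal.Quotient.mk M x⟩, ?_⟩
    · rw [← Ideal.Quotient.eq_zero_iff_mem, map_sub, hout, sub_self]
    · simp [hf]
  set e : ↥M × (R ⧸ M) ≃ R := Equiv.ofBijective f ⟨hinj, hsurj⟩ with he
  -- the block matrix
  set K : Matrix ↥M ↥M ℝ := Matrix.of (fun t t' : ↥M => if t = t' then (0:ℝ) else 1) with hK
  have hre : Matrix.reindex e.symm e.symm (SimpleGraph.adjMatrix ℝ (unitaryCayley R)ᶜ)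
      = blockDiagonal (fun _ : R ⧸ M => K) := by
    ext ⟨t, q⟩ ⟨t', q'⟩
    have hee : ∀ p, e.symm.symm p = f p := fun _ => rfl
    rw [Matrix.reindex_apply, Matrix.submatrix_apply, hee, hee]
    have hadj : (unitaryCayley R)ᶜ.Adj (f (t, q)) (f (t', q')) ↔
        (q = q' ∧ t ≠ t') := by
      rw [SimpleGraph.compl_adj]
      constructor
      · rintro ⟨hne, hnadj⟩
        have hnu : ¬ IsUnit (f (t, q) - f (t', q')) := fun hu => hnadj (show _ ≠ _ ∧ IsUnit _ from ⟨hne, hu⟩)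
        have hdm : f (t, q) - f (t', q') ∈ M := (hmem _).mp hnu
        have hq : q = q' := by
          have : Ideal.Quotient.mk M (f (t, q)) = Ideal.Quotient.mk M (f (t', q')) := by
            rw [Ideal.Quotient.eq]; exact hdm
          rwa [hπf, hπf] at this
        refine ⟨hq, fun ht => hne ?_⟩
        rw [hq, ht]
      · rintro ⟨hq, ht⟩
        subst hq
        have hsub : f (t, q) - f (t', q) = (t : R) - (t' : R) := by simp [hf]
        have hne : f (t, q) ≠ f (t', q) := by
          intro h
          apply ht
          exact Subtype.ext (by simpa [hf] using h)
        refine ⟨hne, fun hadj => ?_⟩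
        have : ¬ IsUnit (f (t, q) - f (t', q)) := by
          rw [hmem, hsub]
          exact M.sub_mem t.2 t'.2
        exact this (show _ ≠ _ ∧ IsUnit (f (t, q) - f (t', q)) from hadj).2
    rw [SimpleGraph.adjMatrix_apply, blockDiagonal_apply]
    by_cases hq : q = q'
    · subst hq
      simp only [if_pos rfl, hK, Matrix.of_apply]
      by_cases ht : t = t'
      · subst ht; simp [hadj]
      · rw [if_pos (hadj.mpr ⟨rfl, ht⟩), if_neg ht]
        simp
    · rw [if_neg, if_neg hq]
      rw [hadj]
      rintro ⟨h, -⟩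
      exact hq h
  have hcp : (SimpleGraph.adjMatrix ℝ (unitaryCayley R)ᶜ).charpoly
      = (blockDiagonal (fun _ : R ⧸ M => K)).charpoly := by
    rw [← Matrix.charpoly_reindex e.symm, hre]
  have hcardR : Fintype.card R = Fintype.card (R ⧸ M) * m := by
    rw [← Fintype.card_congr e, Fintype.card_prod, hmcard, Nat.mul_comm]
  have hdiv : Fintype.card R / m = Fintype.card (R ⧸ M) := by
    rw [hcardR, Nat.mul_div_cancel _ (lt_of_lt_of_le Nat.zero_lt_one hm1)]
  haveI : Nonempty ↥M := ⟨⟨0, M.zero_mem⟩⟩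
  rw [hcp, charpoly_blockDiagonal, Finset.prod_const, charpoly_K, hdiv, ← hmcard,
    Finset.card_univ, mul_pow, ← pow_mul, Nat.mul_comm]

/-- Let `R` be a finite local ring with maximal ideal `M` of order `m`. Then the complement
of the unitary Cayley graph `G_R` is always Ramanujan: its eigenvalues are `m - 1` with
multiplicity `|R|/m` and `-1` with multiplicity `(|R|/m)(m - 1)`. -/
theorem stmt_11 (R : Type*) [CommRing R] [IsLocalRing R] [Fintype R] [DecidableEq R]
    (M : Ideal R) (hM : M.IsMaximal) (m : ℕ) (hm : m = Nat.card M) :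
    IsRamanujan (unitaryCayley R)ᶜ (m - 1) ∧
      (SimpleGraph.adjMatrix ℝ (unitaryCayley R)ᶜ).charpoly =
        (X - C ((m : ℝ) - 1)) ^ (Fintype.card R / m) *
          (X + C (1 : ℝ)) ^ ((Fintype.card R / m) * (m - 1)) := by
  have hcp := main_charpoly R M hM m hm
  refine ⟨?_, hcp⟩
  have hm1 : 1 ≤ m := by
    rw [hm]
    exact Nat.card_pos
  intro μ hroot hne
  have hpne : (SimpleGraph.adjMatrix ℝ (unitaryCayley R)ᶜ).charpoly ≠ 0 :=
    (Matrix.charpoly_monic _).ne_zero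
  have hev : ((SimpleGraph.adjMatrix ℝ (unitaryCayley R)ᶜ).charpoly).IsRoot μ :=
    (Polynomial.mem_roots hpne).mp hroot
  rw [hcp] at hev
  have hev' : (μ - ((m:ℝ) - 1)) ^ (Fintype.card R / m) *
      (μ + 1) ^ ((Fintype.card R / m) * (m - 1)) = 0 := by
    simpa [Polynomial.IsRoot] using hev
  have hcast : ((m - 1 : ℕ) : ℝ) = (m : ℝ) - 1 := by
    rw [Nat.cast_sub hm1, Nat.cast_one]
  rcases mul_eq_zero.mp hev' with h | h
  · exfalso
    apply hne
    have hμ : μ = (m : ℝ) - 1 := by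
      have := pow_eq_zero_iff'.mp h
      linarith [this.1]
    rw [hμ, hcast, abs_of_nonneg]
    have : (1 : ℝ) ≤ (m : ℝ) := by exact_mod_cast hm1
    linarith
  · have h2 := pow_eq_zero_iff'.mp h
    have hμ : μ = -1 := by linarith [h2.1]
    have hm2 : 2 ≤ m := by
      rcases Nat.lt_or_ge m 2 with h' | h'
      · exfalso
        apply h2.2
        interval_cases m
        simp
      · exact h'
    have hm3 : 3 ≤ m := by
      rcases Nat.lt_or_ge m 3 with h' | h'
      · exfalso
        apply hne
        interval_cases m
        · rw [hμ]; norm_num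
      · exact h'
    have hge : (2 : ℝ) ≤ ((m - 1 : ℕ) : ℝ) := by
      rw [hcast]
      have : (3 : ℝ) ≤ (m : ℝ) := by exact_mod_cast hm3
      linarith
    have hsq : (1 : ℝ) ≤ Real.sqrt (((m - 1 : ℕ) : ℝ) - 1) := by
      have h1 := Real.sqrt_le_sqrt (show (1:ℝ) ≤ ((m - 1 : ℕ) : ℝ) - 1 by linarith)
      rwa [Real.sqrt_one] at h1
    rw [hμ]
    rw [abs_neg, abs_one]
    linarith
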